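/- Let r ≥ 1, let A = (a_{i,j}) be an r×r generalised Cartan matrix, and let S be a commutative semiring. If f : {1,…,r} × ℤ → S is an S-valued frieze pattern associated to A, then the map k : {1,…,r} × ℤ → S defined by k(i,m) = (∏_{j=i+1}^{r} f(j,m)^{-a_{j,i}})·(∏_{j=1}^{i-1} f(j,m+1)^{-a_{j,i}}) is an S-valued Y-frieze pattern associated to A. -/

import Mathlib

/-- An r×r generalised Cartan matrix. -/
def IsGCM {r : ℕ} (A : Matrix (Fin r) (Fin r) ℤ) : Prop :=
  (∀ i, A i i = 2) ∧ ∀ i j, i ≠ j → A i j ≤ 0 ∧ (A i j = 0 ↔ A j i = 0)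

/-- An `S`-valued frieze pattern associated to `A`. -/
def IsFriezePat {r : ℕ} {S : Type*} [CommSemiring S] (A : Matrix (Fin r) (Fin r) ℤ)
    (f : Fin r → ℤ → S) : Prop :=
  ∀ i m, f i m * f i (m + 1) =
    1 + (∏ j ∈ Finset.univ.filter (fun j => i < j), f j m ^ (-(A j i)).toNat) *
        (∏ j ∈ Finset.univ.filter (fun j => j < i), f j (m + 1) ^ (-(A j i)).toNat)

/-- An `S`-valued Y-frieze pattern associated to `A`. -/
def IsYFriezePat {r : ℕ} {S : Type*} [CommSemiring S] (A : Matrix (Fin r) (Fin r) ℤ)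
    (k : Fin r → ℤ → S) : Prop :=
  ∀ i m, k i m * k i (m + 1) =
    (∏ j ∈ Finset.univ.filter (fun j => i < j), (1 + k j m) ^ (-(A j i)).toNat) *
    (∏ j ∈ Finset.univ.filter (fun j => j < i), (1 + k j (m + 1)) ^ (-(A j i)).toNat)

/-- Every frieze pattern gives rise to a Y-frieze pattern via the ensemble map. -/
theorem frieze_to_Yfrieze {r : ℕ} (hr : 1 ≤ r) {S : Type*} [CommSemiring S]
    (A : Matrix (Fin r) (Fin r) ℤ) (hA : IsGCM A)
    (f : Fin r → ℤ → S) (hf : IsFriezePat A f) :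
    IsYFriezePat A (fun i m =>
      (∏ j ∈ Finset.univ.filter (fun j => i < j), f j m ^ (-(A j i)).toNat) *
      (∏ j ∈ Finset.univ.filter (fun j => j < i), f j (m + 1) ^ (-(A j i)).toNat)) := by
  intro i m
  simp only
  have key : ∀ (j : Fin r) (m : ℤ),
      1 + (∏ l ∈ Finset.univ.filter (fun l => j < l), f l m ^ (-(A l j)).toNat) *
          (∏ l ∈ Finset.univ.filter (fun l => l < j), f l (m + 1) ^ (-(A l j)).toNat)
        = f j m * f j (m + 1) := fun j m => (hf j m).symm
  have h2 : (m : ℤ) + 1 + 1 = m + 2 := by ring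
  have hR1 : (∏ j ∈ Finset.univ.filter (fun j => i < j),
      (1 + (∏ l ∈ Finset.univ.filter (fun l => j < l), f l m ^ (-(A l j)).toNat) *
          (∏ l ∈ Finset.univ.filter (fun l => l < j), f l (m + 1) ^ (-(A l j)).toNat)) ^ (-(A j i)).toNat)
      = ∏ j ∈ Finset.univ.filter (fun j => i < j), (f j m * f j (m + 1)) ^ (-(A j i)).toNat :=
    Finset.prod_congr rfl (fun j _ => by rw [key j m])
  have hR2 : (∏ j ∈ Finset.univ.filter (fun j => j < i),
      (1 + (∏ l ∈ Finset.univ.filter (fun l => j < l), f l (m + 1) ^ (-(A l j)).toNat) *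
          (∏ l ∈ Finset.univ.filter (fun l => l < j), f l (m + 1 + 1) ^ (-(A l j)).toNat)) ^ (-(A j i)).toNat)
      = ∏ j ∈ Finset.univ.filter (fun j => j < i), (f j (m + 1) * f j (m + 1 + 1)) ^ (-(A j i)).toNat :=
    Finset.prod_congr rfl (fun j _ => by rw [key j (m + 1)])
  rw [hR1, hR2]
  simp only [mul_pow, Finset.prod_mul_distrib]
  ring
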